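/- arXiv:2010.08673 — 2 statements merged into one kernel-verified Lean document; each statement's English description precedes it below -/
import Mathlib

section
/- Let 𝕏 ∈ ℝ^{n×p} and 𝕐 ∈ ℝ^{n×q} be matrices with 𝕏ᵀ𝕏 and 𝕐ᵀ𝕐 positive definite, and let 1 ≤ s_x ≤ p and 1 ≤ s_y ≤ q. For nonempty index sets K ⊆ {1,…,p} and J ⊆ {1,…,q}, let 𝕏_K and 𝕐_J denote the corresponding column submatrices (whose Gram matrices are automatically positive definite), and let C_{J,K} = C(𝕐_J, 𝕏_K) be the sample coherence matrix of these submatrices. Then max over all nonempty K, J with |K| ≤ s_x and |J| ≤ s_y of ‖C_{J,K}‖_F equals the max over all K, J with |K| = s_x and |J| = s_y of ‖C_{J,K}‖_F. -/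
open Matrix

noncomputable section

/-- Squared Frobenius norm of a real matrix: `‖M‖_F² = tr (M Mᵀ)`. -/
def frobSq {m n : Type*} [Fintype m] [Fintype n] (M : Matrix m n ℝ) : ℝ :=
  Matrix.trace (M * Mᵀ)

/-- Frobenius norm of a real matrix. -/
def frobNorm {m n : Type*} [Fintype m] [Fintype n] (M : Matrix m n ℝ) : ℝ :=
  Real.sqrt (frobSq M)

open Classical in
/-- `A^{-1/2}`: the inverse of the unique positive definite square root of a positive
definite matrix `A` (junk value `0` if `A` is not positive definite). -/
def invSqrt {n : Type*} [Fintype n] [DecidableEq n] (A : Matrix n n ℝ) : Matrix n n ℝ :=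
  if h : A.PosDef then
    ((h.posSemidef.1.eigenvectorUnitary : Matrix n n ℝ) *
      diagonal ((↑) ∘ (h.posSemidef.1.eigenvalues · |>.sqrt)) *
      (star h.posSemidef.1.eigenvectorUnitary : Matrix n n ℝ))⁻¹ else 0

/-- The sample coherence matrix `C(𝕐,𝕏) = n⁻¹ S_Y^{-1/2} 𝕐ᵀ 𝕏 S_X^{-1/2}`, where
`S_X = 𝕏ᵀ𝕏/n` and `S_Y = 𝕐ᵀ𝕐/n`. -/
def coh {ν a b : Type*} [Fintype ν] [Fintype a] [Fintype b] [DecidableEq a] [DecidableEq b]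
    (N : ℕ) (Y : Matrix ν b ℝ) (X : Matrix ν a ℝ) : Matrix b a ℝ :=
  (N : ℝ)⁻¹ • (invSqrt ((N : ℝ)⁻¹ • (Yᵀ * Y)) * Yᵀ * X * invSqrt ((N : ℝ)⁻¹ • (Xᵀ * X)))

/-- The matrix obtained from `X` by appending the vector `z` as an extra column. -/
def appendCol {ν a : Type*} (X : Matrix ν a ℝ) (z : ν → ℝ) : Matrix ν (a ⊕ Unit) ℝ :=
  Matrix.of fun i => Sum.elim (X i) fun _ => z i

/-- A vector viewed as a one-column matrix. -/
def colM {ν : Type*} (z : ν → ℝ) : Matrix ν Unit ℝ :=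
  Matrix.of fun i _ => z i

/-- The least-squares residual of `z` regressed on the columns of `X`:
`r = z − X (XᵀX)⁻¹ Xᵀ z`. -/
def resid {ν a : Type*} [Fintype ν] [Fintype a] [DecidableEq a]
    (X : Matrix ν a ℝ) (z : ν → ℝ) : ν → ℝ :=
  z - (X * (Xᵀ * X)⁻¹ * Xᵀ).mulVec z


namespace Matrix.PosSemidef
def sqrt_s6 {n : Type*} [Fintype n] [DecidableEq n] {A : Matrix n n ℝ} (h : A.PosSemidef) :
    Matrix n n ℝ :=
  (h.1.eigenvectorUnitary : Matrix n n ℝ) *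
      diagonal ((↑) ∘ (h.1.eigenvalues · |>.sqrt)) *
      (star h.1.eigenvectorUnitary : Matrix n n ℝ)
lemma posSemidef_sqrt {n : Type*} [Fintype n] [DecidableEq n] {A : Matrix n n ℝ}
    (h : A.PosSemidef) : h.sqrt_s6.PosSemidef := by
  unfold sqrt_s6
  have hd : (diagonal ((↑) ∘ (h.1.eigenvalues · |>.sqrt)) : Matrix n n ℝ).PosSemidef :=
    PosSemidef.diagonal (fun i => by simp [Real.sqrt_nonneg])
  have := hd.mul_mul_conjTranspose_same (h.1.eigenvectorUnitary : Matrix n n ℝ)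
  simpa [Matrix.star_eq_conjTranspose] using this
lemma sqrt_mul_self {n : Type*} [Fintype n] [DecidableEq n] {A : Matrix n n ℝ}
    (h : A.PosSemidef) : h.sqrt_s6 * h.sqrt_s6 = A := by
  unfold sqrt_s6
  have hU : (star h.1.eigenvectorUnitary : Matrix n n ℝ) * (h.1.eigenvectorUnitary : Matrix n n ℝ) = 1 :=
    Unitary.star_mul_self_of_mem h.1.eigenvectorUnitary.2
  have hD : (diagonal ((↑) ∘ (h.1.eigenvalues · |>.sqrt)) : Matrix n n ℝ) *
      diagonal ((↑) ∘ (h.1.eigenvalues · |>.sqrt)) = diagonal ((↑) ∘ h.1.eigenvalues) := by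
    rw [diagonal_mul_diagonal]
    congr 1; funext i
    simp [Real.mul_self_sqrt (h.eigenvalues_nonneg i)]
  conv_rhs => rw [h.1.spectral_theorem]
  calc _ = (h.1.eigenvectorUnitary : Matrix n n ℝ) * (diagonal ((↑) ∘ (h.1.eigenvalues · |>.sqrt)) *
      ((star h.1.eigenvectorUnitary : Matrix n n ℝ) * (h.1.eigenvectorUnitary : Matrix n n ℝ)) *
      diagonal ((↑) ∘ (h.1.eigenvalues · |>.sqrt))) * (star h.1.eigenvectorUnitary : Matrix n n ℝ) := by
        simp only [Matrix.mul_assoc]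
    _ = _ := by
      rw [hU, Matrix.mul_one, hD]
      simp [Unitary.conjStarAlgAut_apply]
      rfl
end Matrix.PosSemidef

lemma trace_nonneg_of_posSemidef {m : Type*} [Fintype m] [DecidableEq m]
    {M : Matrix m m ℝ} (h : M.PosSemidef) : 0 ≤ M.trace := by
  exact h.trace_nonneg

lemma posDef_smul {m : Type*} [Fintype m] {M : Matrix m m ℝ} (h : M.PosDef)
    {c : ℝ} (hc : 0 < c) : (c • M).PosDef := by
  exact h.smul hc

lemma posDef_submatrix {m k : Type*} [Fintype m] [Fintype k] [DecidableEq m] [DecidableEq k]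
    {M : Matrix m m ℝ} (h : M.PosDef) (e : k → m) (he : Function.Injective e) :
    (M.submatrix e e).PosDef := by
  exact h.submatrix he
set_option linter.unusedSectionVars false

variable {ν a b : Type*} [Fintype ν] [Fintype a] [Fintype b] [DecidableEq a] [DecidableEq b]

def projM (X : Matrix ν a ℝ) : Matrix ν ν ℝ := X * (Xᵀ * X)⁻¹ * Xᵀ

lemma gram_inv_transpose (X : Matrix ν a ℝ) : ((Xᵀ * X)⁻¹)ᵀ = (Xᵀ * X)⁻¹ := by
  rw [transpose_nonsing_inv, transpose_mul, transpose_transpose]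

lemma projM_transpose (X : Matrix ν a ℝ) : (projM X)ᵀ = projM X := by
  simp [projM, transpose_mul, gram_inv_transpose, Matrix.mul_assoc]

lemma projM_posSemidef (X : Matrix ν a ℝ) (h : (Xᵀ * X).PosDef) : (projM X).PosSemidef := by
  have := (h.inv).posSemidef.mul_mul_conjTranspose_same X
  rwa [conjTranspose_eq_transpose_of_trivial] at this

lemma gram_isUnit_det (X : Matrix ν a ℝ) (h : (Xᵀ * X).PosDef) : IsUnit (Xᵀ * X).det :=
  isUnit_iff_ne_zero.2 h.det_pos.ne'

lemma projM_mul_self_base (X : Matrix ν a ℝ) (h : (Xᵀ * X).PosDef) : projM X * X = X := by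
  have h1 : (Xᵀ * X)⁻¹ * (Xᵀ * X) = 1 := Matrix.nonsing_inv_mul _ (gram_isUnit_det X h)
  calc projM X * X = X * ((Xᵀ * X)⁻¹ * (Xᵀ * X)) := by simp [projM, Matrix.mul_assoc]
    _ = X := by rw [h1, Matrix.mul_one]

lemma projM_idem (Z : Matrix ν a ℝ) (h : (Zᵀ * Z).PosDef) : projM Z * projM Z = projM Z := by
  calc projM Z * projM Z = (projM Z * Z) * ((Zᵀ * Z)⁻¹ * Zᵀ) := by
        simp [projM, Matrix.mul_assoc]
    _ = projM Z := by rw [projM_mul_self_base Z h]; simp [projM, Matrix.mul_assoc]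

lemma projM_absorb (X' : Matrix ν a ℝ) (h' : (X'ᵀ * X').PosDef) (Z : Matrix ν b ℝ)
    (hZ : ∀ j : b, ∃ k : a, ∀ i, Z i j = X' i k) : projM X' * Z = Z := by
  ext i j
  obtain ⟨k, hk⟩ := hZ j
  have := congrFun (congrFun (projM_mul_self_base X' h') i) k
  simp only [Matrix.mul_apply] at this ⊢
  simp only [hk]
  exact this

lemma projM_sub_posSemidef (X' : Matrix ν a ℝ) (h' : (X'ᵀ * X').PosDef)
    (Z : Matrix ν b ℝ) (hZ : (Zᵀ * Z).PosDef)
    (habs : projM X' * Z = Z) : (projM X' - projM Z).PosSemidef := by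
  have hPP' : projM X' * projM Z = projM Z := by
    calc projM X' * projM Z = (projM X' * Z) * ((Zᵀ * Z)⁻¹ * Zᵀ) := by
          simp [projM, Matrix.mul_assoc]
      _ = projM Z := by rw [habs]; simp [projM, Matrix.mul_assoc]
  have hP'P : projM Z * projM X' = projM Z := by
    have := congrArg Matrix.transpose hPP'
    rwa [transpose_mul, projM_transpose, projM_transpose] at this
  set M := projM X' - projM Z with hM
  have hMt : Mᵀ = M := by
    rw [hM, transpose_sub, projM_transpose, projM_transpose]
  have hMM : M * M = M := by
    rw [hM, Matrix.sub_mul, Matrix.mul_sub, Matrix.mul_sub, hPP', hP'P,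
      projM_idem X' h', projM_idem Z hZ]
    abel
  have := posSemidef_conjTranspose_mul_self M
  rwa [conjTranspose_eq_transpose_of_trivial, hMt, hMM] at this

lemma trace_mul_mono {ν : Type*} [Fintype ν] [DecidableEq ν]
    (P P' Q : Matrix ν ν ℝ) (hQ : Q.PosSemidef) (hD : (P' - P).PosSemidef) :
    (P * Q).trace ≤ (P' * Q).trace := by
  have h1 : ((P' - P) * Q).trace = (P' * Q).trace - (P * Q).trace := by
    rw [Matrix.sub_mul, trace_sub]
  have h2 : 0 ≤ ((P' - P) * Q).trace := by
    have hs : hQ.sqrt_s6 * hQ.sqrt_s6 = Q := hQ.sqrt_mul_self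
    have hsym : hQ.sqrt_s6ᴴ = hQ.sqrt_s6 := hQ.posSemidef_sqrt.1
    have hpsd : (hQ.sqrt_s6 * (P' - P) * hQ.sqrt_s6ᴴ).PosSemidef :=
      hD.mul_mul_conjTranspose_same hQ.sqrt_s6
    rw [hsym] at hpsd
    have := trace_nonneg_of_posSemidef hpsd
    calc (0:ℝ) ≤ (hQ.sqrt_s6 * (P' - P) * hQ.sqrt_s6).trace := this
      _ = ((P' - P) * (hQ.sqrt_s6 * hQ.sqrt_s6)).trace := by
          rw [Matrix.mul_assoc, trace_mul_comm, Matrix.mul_assoc]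
      _ = ((P' - P) * Q).trace := by rw [hs]
  linarith

section InvSqrt
variable {m : Type*} [Fintype m] [DecidableEq m]

lemma invSqrt_of_posDef {A : Matrix m m ℝ} (h : A.PosDef) :
    invSqrt A = (h.posSemidef.sqrt_s6)⁻¹ := by
  unfold invSqrt
  rw [dif_pos h]
  rfl

lemma invSqrt_mul_self {A : Matrix m m ℝ} (h : A.PosDef) :
    invSqrt A * invSqrt A = A⁻¹ := by
  rw [invSqrt_of_posDef h, ← Matrix.mul_inv_rev, h.posSemidef.sqrt_mul_self]

lemma invSqrt_transpose {A : Matrix m m ℝ} (h : A.PosDef) :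
    (invSqrt A)ᵀ = invSqrt A := by
  rw [invSqrt_of_posDef h, transpose_nonsing_inv]
  congr 1
  rw [← conjTranspose_eq_transpose_of_trivial]
  exact h.posSemidef.posSemidef_sqrt.1

lemma smul_inv_of_posDef {A : Matrix m m ℝ} (h : A.PosDef) {c : ℝ} (hc : c ≠ 0) :
    (c • A)⁻¹ = c⁻¹ • A⁻¹ := by
  apply Matrix.inv_eq_left_inv
  rw [Matrix.smul_mul, Matrix.mul_smul, smul_smul, inv_mul_cancel₀ hc,
    Matrix.nonsing_inv_mul _ (isUnit_iff_ne_zero.2 h.det_pos.ne'), one_smul]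

end InvSqrt

lemma trace_RS {ν a b : Type*} [Fintype ν] [Fintype a] [Fintype b]
    (X : Matrix ν a ℝ) (Y : Matrix ν b ℝ) (R : Matrix b b ℝ) (S : Matrix a a ℝ)
    (hR : Rᵀ = R) (hS : Sᵀ = S) :
    ((R * Yᵀ * X * S) * (R * Yᵀ * X * S)ᵀ).trace
      = ((X * (S * S) * Xᵀ) * (Y * (R * R) * Yᵀ)).trace := by
  have e1 : (R * Yᵀ * X * S) * (R * Yᵀ * X * S)ᵀ
      = R * (Yᵀ * (X * (S * (S * (Xᵀ * (Y * R)))))) := by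
    simp [transpose_mul, hR, hS, Matrix.mul_assoc]
  rw [e1, trace_mul_comm]
  have e2 : (Yᵀ * (X * (S * (S * (Xᵀ * (Y * R)))))) * R
      = Yᵀ * (X * (S * (S * (Xᵀ * (Y * (R * R)))))) := by
    simp [Matrix.mul_assoc]
  rw [e2, trace_mul_comm]
  have e3 : (X * (S * (S * (Xᵀ * (Y * (R * R)))))) * Yᵀ
      = (X * (S * S) * Xᵀ) * (Y * (R * R) * Yᵀ) := by
    simp [Matrix.mul_assoc]
  rw [e3]

lemma frobSq_coh {ν a b : Type*} [Fintype ν] [Fintype a] [Fintype b]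
    [DecidableEq a] [DecidableEq b]
    (N : ℕ) (hN : 0 < N) (X : Matrix ν a ℝ) (Y : Matrix ν b ℝ)
    (hX : (Xᵀ * X).PosDef) (hY : (Yᵀ * Y).PosDef) :
    frobSq (coh N Y X) = (projM X * projM Y).trace := by
  have hc : (0:ℝ) < (N : ℝ)⁻¹ := by positivity
  have hcn : ((N:ℝ))⁻¹ ≠ 0 := hc.ne'
  set c : ℝ := (N : ℝ)⁻¹ with hcdef
  have hSX : (c • (Xᵀ * X)).PosDef := posDef_smul hX hc
  have hSY : (c • (Yᵀ * Y)).PosDef := posDef_smul hY hc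
  set S := invSqrt (c • (Xᵀ * X)) with hSdef
  set R := invSqrt (c • (Yᵀ * Y)) with hRdef
  have hSsym : Sᵀ = S := invSqrt_transpose hSX
  have hRsym : Rᵀ = R := invSqrt_transpose hSY
  have hSS : S * S = c⁻¹ • (Xᵀ * X)⁻¹ := by
    rw [hSdef, invSqrt_mul_self hSX, smul_inv_of_posDef hX hcn]
  have hRR : R * R = c⁻¹ • (Yᵀ * Y)⁻¹ := by
    rw [hRdef, invSqrt_mul_self hSY, smul_inv_of_posDef hY hcn]
  have hcoh : coh N Y X = c • (R * Yᵀ * X * S) := rfl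
  rw [frobSq, hcoh, transpose_smul, Matrix.smul_mul, Matrix.mul_smul, smul_smul,
    trace_smul, smul_eq_mul, trace_RS X Y R S hRsym hSsym, hSS, hRR]
  simp only [Matrix.mul_smul, Matrix.smul_mul, smul_smul, trace_smul, smul_eq_mul,
    projM, Matrix.mul_assoc]
  field_simp

lemma gram_submatrix {ν m k : Type*} [Fintype ν] [Fintype m] [Fintype k]
    (X : Matrix ν m ℝ) (e : k → m) :
    (X.submatrix id e)ᵀ * (X.submatrix id e) = (Xᵀ * X).submatrix e e := by
  ext i j
  simp [Matrix.mul_apply]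

lemma gram_submatrix_posDef {ν m k : Type*} [Fintype ν] [Fintype m] [Fintype k]
    [DecidableEq m] [DecidableEq k]
    {X : Matrix ν m ℝ} (hX : (Xᵀ * X).PosDef) {e : k → m} (he : Function.Injective e) :
    ((X.submatrix id e)ᵀ * (X.submatrix id e)).PosDef := by
  rw [gram_submatrix]
  exact posDef_submatrix hX e he

lemma coh_sub_mono {n p q : ℕ} (hn : 0 < n)
    (X : Matrix (Fin n) (Fin p) ℝ) (Y : Matrix (Fin n) (Fin q) ℝ)
    (hX : (Xᵀ * X).PosDef) (hY : (Yᵀ * Y).PosDef)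
    {K K' : Finset (Fin p)} {J J' : Finset (Fin q)} (hK : K ⊆ K') (hJ : J ⊆ J') :
    frobNorm (coh n (Y.submatrix id (fun j : {j // j ∈ J} => (j : Fin q)))
        (X.submatrix id (fun k : {k // k ∈ K} => (k : Fin p)))) ≤
      frobNorm (coh n (Y.submatrix id (fun j : {j // j ∈ J'} => (j : Fin q)))
        (X.submatrix id (fun k : {k // k ∈ K'} => (k : Fin p)))) := by
  set XK := X.submatrix id (fun k : {k // k ∈ K} => (k : Fin p)) with hXK0
  set XK' := X.submatrix id (fun k : {k // k ∈ K'} => (k : Fin p)) with hXK'0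
  set YJ := Y.submatrix id (fun j : {j // j ∈ J} => (j : Fin q)) with hYJ0
  set YJ' := Y.submatrix id (fun j : {j // j ∈ J'} => (j : Fin q)) with hYJ'0
  have hXK : (XKᵀ * XK).PosDef := gram_submatrix_posDef hX (fun _ _ h => Subtype.ext h)
  have hXK' : (XK'ᵀ * XK').PosDef := gram_submatrix_posDef hX (fun _ _ h => Subtype.ext h)
  have hYJ : (YJᵀ * YJ).PosDef := gram_submatrix_posDef hY (fun _ _ h => Subtype.ext h)
  have hYJ' : (YJ'ᵀ * YJ').PosDef := gram_submatrix_posDef hY (fun _ _ h => Subtype.ext h)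
  have habsX : projM XK' * XK = XK :=
    projM_absorb XK' hXK' XK (fun j => ⟨⟨j.1, hK j.2⟩, fun i => rfl⟩)
  have habsY : projM YJ' * YJ = YJ :=
    projM_absorb YJ' hYJ' YJ (fun j => ⟨⟨j.1, hJ j.2⟩, fun i => rfl⟩)
  rw [frobNorm, frobNorm]
  apply Real.sqrt_le_sqrt
  rw [frobSq_coh n hn XK YJ hXK hYJ, frobSq_coh n hn XK' YJ' hXK' hYJ']
  calc (projM XK * projM YJ).trace
      ≤ (projM XK' * projM YJ).trace :=
        trace_mul_mono _ _ _ (projM_posSemidef YJ hYJ)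
          (projM_sub_posSemidef XK' hXK' XK hXK habsX)
    _ = (projM YJ * projM XK').trace := trace_mul_comm _ _
    _ ≤ (projM YJ' * projM XK').trace :=
        trace_mul_mono _ _ _ (projM_posSemidef XK' hXK')
          (projM_sub_posSemidef YJ' hYJ' YJ hYJ habsY)
    _ = (projM XK' * projM YJ').trace := trace_mul_comm _ _

/-- The maximal sample root-Pillai trace `‖C_{J,K}‖_F` over nonempty column subsets of
cardinality at most `(s_x, s_y)` equals the maximum over subsets of cardinality exactly
`(s_x, s_y)` (equation (6) of the paper). -/
theorem max_coh_card_le_eq_max_coh_card_eq (n p q sx sy : ℕ)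
    (X : Matrix (Fin n) (Fin p) ℝ) (Y : Matrix (Fin n) (Fin q) ℝ)
    (hX : (Xᵀ * X).PosDef) (hY : (Yᵀ * Y).PosDef)
    (hsx1 : 1 ≤ sx) (hsxp : sx ≤ p) (hsy1 : 1 ≤ sy) (hsyq : sy ≤ q) :
    sSup {t : ℝ | ∃ (K : Finset (Fin p)) (J : Finset (Fin q)),
        K.Nonempty ∧ J.Nonempty ∧ K.card ≤ sx ∧ J.card ≤ sy ∧
        t = frobNorm (coh n (Y.submatrix id (fun j : {j // j ∈ J} => (j : Fin q)))
            (X.submatrix id (fun k : {k // k ∈ K} => (k : Fin p))))} =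
      sSup {t : ℝ | ∃ (K : Finset (Fin p)) (J : Finset (Fin q)),
        K.card = sx ∧ J.card = sy ∧
        t = frobNorm (coh n (Y.submatrix id (fun j : {j // j ∈ J} => (j : Fin q)))
            (X.submatrix id (fun k : {k // k ∈ K} => (k : Fin p))))} := by
  -- n is positive
  have hp : 0 < p := lt_of_lt_of_le hsx1 hsxp
  have hn : 0 < n := by
    by_contra hn0
    push_neg at hn0
    interval_cases n
    have hzero : Xᵀ * X = 0 := by
      ext i j
      simp [Matrix.mul_apply]
    have hv : (Finsupp.single (⟨0, hp⟩ : Fin p) (1:ℝ)) ≠ (0 : Fin p →₀ ℝ) := by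
      intro h0
      simp at h0
    have := hX.2 hv
    rw [hzero] at this
    simp at this
  set f : Finset (Fin p) × Finset (Fin q) → ℝ := fun P =>
    frobNorm (coh n (Y.submatrix id (fun j : {j // j ∈ P.2} => (j : Fin q)))
      (X.submatrix id (fun k : {k // k ∈ P.1} => (k : Fin p)))) with hf
  set Sle := {t : ℝ | ∃ (K : Finset (Fin p)) (J : Finset (Fin q)),
      K.Nonempty ∧ J.Nonempty ∧ K.card ≤ sx ∧ J.card ≤ sy ∧
      t = frobNorm (coh n (Y.submatrix id (fun j : {j // j ∈ J} => (j : Fin q)))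
          (X.submatrix id (fun k : {k // k ∈ K} => (k : Fin p))))} with hSle
  set Seq := {t : ℝ | ∃ (K : Finset (Fin p)) (J : Finset (Fin q)),
      K.card = sx ∧ J.card = sy ∧
      t = frobNorm (coh n (Y.submatrix id (fun j : {j // j ∈ J} => (j : Fin q)))
          (X.submatrix id (fun k : {k // k ∈ K} => (k : Fin p))))} with hSeq
  have hleRange : Sle ⊆ Set.range f := by
    rintro t ⟨K, J, _, _, _, _, rfl⟩
    exact ⟨(K, J), rfl⟩
  have heqRange : Seq ⊆ Set.range f := by
    rintro t ⟨K, J, _, _, rfl⟩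
    exact ⟨(K, J), rfl⟩
  have hleFin : Sle.Finite := (Set.finite_range f).subset hleRange
  have heqFin : Seq.Finite := (Set.finite_range f).subset heqRange
  have hbddle : BddAbove Sle := hleFin.bddAbove
  have hbddeq : BddAbove Seq := heqFin.bddAbove
  have hsub : Seq ⊆ Sle := by
    rintro t ⟨K, J, hKc, hJc, rfl⟩
    exact ⟨K, J, Finset.card_pos.mp (by omega), Finset.card_pos.mp (by omega),
      hKc.le, hJc.le, rfl⟩
  have heqNe : Seq.Nonempty := by
    obtain ⟨K, -, hKc⟩ := Finset.exists_subset_card_eq (s := (Finset.univ : Finset (Fin p))) (n := sx)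
      (by simpa using hsxp)
    obtain ⟨J, -, hJc⟩ := Finset.exists_subset_card_eq (s := (Finset.univ : Finset (Fin q))) (n := sy)
      (by simpa using hsyq)
    exact ⟨_, K, J, hKc, hJc, rfl⟩
  have hdom : ∀ t ∈ Sle, ∃ u ∈ Seq, t ≤ u := by
    rintro t ⟨K, J, -, -, hKc, hJc, rfl⟩
    obtain ⟨K', hKK', -, hK'c⟩ := Finset.exists_subsuperset_card_eq
      (K.subset_univ) hKc (by simpa using hsxp)
    obtain ⟨J', hJJ', -, hJ'c⟩ := Finset.exists_subsuperset_card_eq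
      (J.subset_univ) hJc (by simpa using hsyq)
    exact ⟨_, ⟨K', J', hK'c, hJ'c, rfl⟩, coh_sub_mono hn X Y hX hY hKK' hJJ'⟩
  apply le_antisymm
  · apply csSup_le (heqNe.mono hsub)
    intro t ht
    obtain ⟨u, hu, htu⟩ := hdom t ht
    exact htu.trans (le_csSup hbddeq hu)
  · exact csSup_le_csSup hbddle heqNe hsub
end
end

section
/- Let A ∈ ℝ^{p×p} and B ∈ ℝ^{q×q} be symmetric positive definite, let u ∈ ℝ^p, v ∈ ℝ^q, and L ∈ ℝ^{q×p}. Let Λ : (0,1] → ℝ^{q×p} be a family of matrices with Λ_t ≠ 0 for each t, Λ_t → 0 as t → 0⁺, and Λ_t/‖Λ_t‖_F → L as t → 0⁺ (in Frobenius norm). Then, as t → 0⁺, (2‖Λ_t‖_F)^{-1} [ −uᵀ A^{-1/2} Λ_tᵀ Λ_t A^{-1/2} u − vᵀ B^{-1/2} Λ_t Λ_tᵀ B^{-1/2} v + 2 vᵀ B^{-1/2} Λ_t A^{-1/2} u ] → vᵀ B^{-1/2} L A^{-1/2} u. -/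
open Matrix Filter Topology

noncomputable section

open scoped ComplexOrder in
/-- The square root of a positive semidefinite matrix, as defined in the older Mathlib
(`Matrix.PosSemidef.sqrt`, since removed). -/
def Matrix.PosSemidef.sqrt {n 𝕜 : Type*} [Fintype n] [RCLike 𝕜] [DecidableEq n]
    {A : Matrix n n 𝕜} (hA : A.PosSemidef) : Matrix n n 𝕜 :=
  hA.1.eigenvectorUnitary.1 * diagonal ((↑) ∘ (√·) ∘ hA.1.eigenvalues) *
  (star hA.1.eigenvectorUnitary : Matrix n n 𝕜)

lemma frobSq_eq_sum {m n : Type*} [Fintype m] [Fintype n] (M : Matrix m n ℝ) :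
    frobSq M = ∑ i, ∑ j, (M i j) ^ 2 := by
  simp [frobSq, Matrix.trace, Matrix.diag, Matrix.mul_apply, sq]

lemma abs_entry_le_frobNorm {m n : Type*} [Fintype m] [Fintype n] (M : Matrix m n ℝ)
    (i : m) (j : n) : |M i j| ≤ frobNorm M := by
  rw [frobNorm, ← Real.sqrt_sq_eq_abs]
  apply Real.sqrt_le_sqrt
  rw [frobSq_eq_sum]
  calc (M i j) ^ 2 ≤ ∑ j', (M i j') ^ 2 :=
        Finset.single_le_sum (f := fun j' => (M i j') ^ 2) (fun _ _ => sq_nonneg _) (Finset.mem_univ j)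
    _ ≤ ∑ i', ∑ j', (M i' j') ^ 2 :=
        Finset.single_le_sum (f := fun i' => ∑ j', (M i' j') ^ 2)
          (fun _ _ => Finset.sum_nonneg fun _ _ => sq_nonneg _) (Finset.mem_univ i)

lemma frobNorm_pos {m n : Type*} [Fintype m] [Fintype n] {M : Matrix m n ℝ}
    (h : M ≠ 0) : 0 < frobNorm M := by
  rcases (Real.sqrt_nonneg (frobSq M)).lt_or_eq with h' | h'
  · exact h'
  · exfalso
    apply h
    ext i j
    have h2 := abs_entry_le_frobNorm M i j
    rw [frobNorm, ← h'] at h2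
    simpa using abs_nonpos_iff.1 h2

/-- Continuous extension of the canonical gradient of the root-Pillai trace to the null
(equation (7) of the paper): if `Λ_t ≠ 0` on `(0,1]`, `Λ_t → 0` and `Λ_t/‖Λ_t‖_F → L` in
Frobenius norm as `t → 0⁺`, then the canonical gradient of the Pillai trace along the family,
divided by `2‖Λ_t‖_F`, converges as `t → 0⁺` to `vᵀ B^{-1/2} L A^{-1/2} u`. -/
theorem root_pillai_gradient_null_limit (p q : ℕ)
    (A : Matrix (Fin p) (Fin p) ℝ) (B : Matrix (Fin q) (Fin q) ℝ)
    (hA : A.PosDef) (hB : B.PosDef)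
    (u : Fin p → ℝ) (v : Fin q → ℝ) (L : Matrix (Fin q) (Fin p) ℝ)
    (Λ : ℝ → Matrix (Fin q) (Fin p) ℝ)
    (hne : ∀ t ∈ Set.Ioc (0 : ℝ) 1, Λ t ≠ 0)
    (hto0 : Tendsto (fun t => frobNorm (Λ t)) (𝓝[>] (0 : ℝ)) (𝓝 0))
    (hnorm : Tendsto (fun t => frobNorm ((frobNorm (Λ t))⁻¹ • Λ t - L))
      (𝓝[>] (0 : ℝ)) (𝓝 0)) :
    Tendsto (fun t => (2 * frobNorm (Λ t))⁻¹ *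
        (-(u ⬝ᵥ (((hA.posSemidef.sqrt)⁻¹ * (Λ t)ᵀ * Λ t * (hA.posSemidef.sqrt)⁻¹).mulVec u))
          - (v ⬝ᵥ (((hB.posSemidef.sqrt)⁻¹ * Λ t * (Λ t)ᵀ * (hB.posSemidef.sqrt)⁻¹).mulVec v))
          + 2 * (v ⬝ᵥ (((hB.posSemidef.sqrt)⁻¹ * Λ t * (hA.posSemidef.sqrt)⁻¹).mulVec u))))
      (𝓝[>] (0 : ℝ))
      (𝓝 (v ⬝ᵥ (((hB.posSemidef.sqrt)⁻¹ * L * (hA.posSemidef.sqrt)⁻¹).mulVec u))) := by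
  set s : Matrix (Fin p) (Fin p) ℝ := (hA.posSemidef.sqrt)⁻¹ with hs
  set r : Matrix (Fin q) (Fin q) ℝ := (hB.posSemidef.sqrt)⁻¹ with hr
  set N : ℝ → ℝ := fun t => frobNorm (Λ t) with hNdef
  set M : ℝ → Matrix (Fin q) (Fin p) ℝ := fun t => (N t)⁻¹ • Λ t with hMdef
  -- entrywise convergence of M to L
  have hM : Tendsto M (𝓝[>] (0 : ℝ)) (𝓝 L) := by
    refine tendsto_pi_nhds.2 fun i => ?_
    refine tendsto_pi_nhds.2 fun j => ?_
    rw [tendsto_iff_dist_tendsto_zero]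
    apply squeeze_zero (fun t => dist_nonneg) (fun t => ?_) hnorm
    rw [Real.dist_eq]
    exact abs_entry_le_frobNorm (M t - L) i j
  -- continuous functionals of the matrix
  have ca : Continuous (fun X : Matrix (Fin q) (Fin p) ℝ =>
      u ⬝ᵥ ((s * Xᵀ * X * s).mulVec u)) :=
    Continuous.dotProduct continuous_const
      (Continuous.matrix_mulVec
        (((continuous_const.matrix_mul continuous_id.matrix_transpose).matrix_mul
          continuous_id).matrix_mul continuous_const) continuous_const)
  have cb : Continuous (fun X : Matrix (Fin q) (Fin p) ℝ =>
      v ⬝ᵥ ((r * X * Xᵀ * r).mulVec v)) :=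
    Continuous.dotProduct continuous_const
      (Continuous.matrix_mulVec
        (((continuous_const.matrix_mul continuous_id).matrix_mul
          continuous_id.matrix_transpose).matrix_mul continuous_const) continuous_const)
  have cc : Continuous (fun X : Matrix (Fin q) (Fin p) ℝ =>
      v ⬝ᵥ ((r * X * s).mulVec u)) :=
    Continuous.dotProduct continuous_const
      (Continuous.matrix_mulVec
        ((continuous_const.matrix_mul continuous_id).matrix_mul continuous_const)
        continuous_const)
  have ha : Tendsto (fun t => u ⬝ᵥ ((s * (M t)ᵀ * M t * s).mulVec u)) (𝓝[>] (0 : ℝ))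
      (𝓝 (u ⬝ᵥ ((s * Lᵀ * L * s).mulVec u))) := (ca.tendsto L).comp hM
  have hb : Tendsto (fun t => v ⬝ᵥ ((r * M t * (M t)ᵀ * r).mulVec v)) (𝓝[>] (0 : ℝ))
      (𝓝 (v ⬝ᵥ ((r * L * Lᵀ * r).mulVec v))) := (cb.tendsto L).comp hM
  have hc : Tendsto (fun t => v ⬝ᵥ ((r * M t * s).mulVec u)) (𝓝[>] (0 : ℝ))
      (𝓝 (v ⬝ᵥ ((r * L * s).mulVec u))) := (cc.tendsto L).comp hM
  have key : Tendsto (fun t =>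
      -(N t / 2) * (u ⬝ᵥ ((s * (M t)ᵀ * M t * s).mulVec u))
        - (N t / 2) * (v ⬝ᵥ ((r * M t * (M t)ᵀ * r).mulVec v))
        + v ⬝ᵥ ((r * M t * s).mulVec u)) (𝓝[>] (0 : ℝ))
      (𝓝 (-((0:ℝ) / 2) * (u ⬝ᵥ ((s * Lᵀ * L * s).mulVec u))
        - ((0:ℝ) / 2) * (v ⬝ᵥ ((r * L * Lᵀ * r).mulVec v))
        + v ⬝ᵥ ((r * L * s).mulVec u))) :=
    (((hto0.div_const 2).neg.mul ha).sub ((hto0.div_const 2).mul hb)).add hc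
  have hval : -((0:ℝ) / 2) * (u ⬝ᵥ ((s * Lᵀ * L * s).mulVec u))
        - ((0:ℝ) / 2) * (v ⬝ᵥ ((r * L * Lᵀ * r).mulVec v))
        + v ⬝ᵥ ((r * L * s).mulVec u) = v ⬝ᵥ ((r * L * s).mulVec u) := by ring
  rw [hval] at key
  refine key.congr' ?_
  filter_upwards [Ioc_mem_nhdsGT_of_mem (by norm_num : (0:ℝ) ∈ Set.Ico (0:ℝ) 1)] with t ht
  have hNt : 0 < N t := frobNorm_pos (hne t ht)
  have hMt : M t = (N t)⁻¹ • Λ t := rfl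
  rw [hMt]
  simp only [Matrix.transpose_smul, Matrix.smul_mul, Matrix.mul_smul,
    Matrix.smul_mulVec, dotProduct_smul, smul_eq_mul, smul_smul]
  simp only [hNdef] at hNt ⊢
  field_simp
end
end
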